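/- Let ρ > 0, let x_1,…,x_n ∈ ℝ^p, y_1,…,y_n ∈ ℝ, let X be the n×p matrix with i-th row x_iᵀ, let D = (1/n)·Σ_{i=1}^n y_i x_i x_iᵀ, and let A be a symmetric p×p real matrix. Set D' = D + ρA, G = ρ I_n + n^{-1}(X Xᵀ) ∘ (X Xᵀ) (which is invertible), w = G^{-1} d' where d'_i = (1/n)·x_iᵀ D' x_i, and B̂ = ρ^{-1} D' − ρ^{-1} Xᵀ diag(w) X. Then B̂ is symmetric and is the unique minimizer over all p×p real matrices B of the proximal objective (1/(2n)) Σ_{i=1}^n (y_i − x_iᵀ B x_i)² + (ρ/2)‖B − A‖₂². -/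
import Mathlib


open Matrix


private lemma sum_comm3' {α β γ M : Type*} [AddCommMonoid M] [Fintype α] [Fintype β] [Fintype γ]
    (g : α → β → γ → M) :
    ∑ a, ∑ b, ∑ c, g a b c = ∑ c, ∑ a, ∑ b, g a b c := by
  have h1 : ∀ a, ∑ b, ∑ c, g a b c = ∑ c, ∑ b, g a b c := fun a => Finset.sum_comm
  simp_rw [h1]
  exact Finset.sum_comm

private lemma sum_comm4' {α β γ δ M : Type*} [AddCommMonoid M] [Fintype α] [Fintype β] [Fintype γ]
    [Fintype δ] (g : α → β → γ → δ → M) :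
    ∑ a, ∑ b, ∑ c, ∑ d, g a b c d = ∑ c, ∑ d, ∑ a, ∑ b, g a b c d := by
  have h1 : ∀ a, ∑ b, ∑ c, ∑ d, g a b c d = ∑ c, ∑ d, ∑ b, g a b c d :=
    fun a => (sum_comm3' (fun c d b => g a b c d)).symm
  simp_rw [h1]
  rw [Finset.sum_comm]
  exact Finset.sum_congr rfl fun c _ => Finset.sum_comm

/-- the proximal operator of the quadratic-regression squared loss:
with `D' = D + ρA`, `B̂ = ρ⁻¹ D' − ρ⁻¹ Xᵀ diag(w) X` is symmetric and is the unique
minimizer of `B ↦ (1/(2n)) Σᵢ (yᵢ − xᵢᵀ B xᵢ)² + (ρ/2)‖B − A‖₂²`. -/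
theorem stmt_17 (n p : ℕ) (hn : 0 < n) (ρ : ℝ) (hρ : 0 < ρ)
    (x : Fin n → Fin p → ℝ) (y : Fin n → ℝ)
    (X : Matrix (Fin n) (Fin p) ℝ) (hX : ∀ i j, X i j = x i j)
    (D : Matrix (Fin p) (Fin p) ℝ)
    (hD : D = (n : ℝ)⁻¹ • ∑ i, y i • vecMulVec (x i) (x i))
    (A : Matrix (Fin p) (Fin p) ℝ) (hA : Aᵀ = A)
    (D' : Matrix (Fin p) (Fin p) ℝ) (hD' : D' = D + ρ • A)
    (G : Matrix (Fin n) (Fin n) ℝ)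
    (hG : G = ρ • (1 : Matrix (Fin n) (Fin n) ℝ) +
      (n : ℝ)⁻¹ • ((X * Xᵀ).hadamard (X * Xᵀ)))
    (w : Fin n → ℝ)
    (hw : w = G⁻¹.mulVec (fun i => (n : ℝ)⁻¹ * (x i ⬝ᵥ D'.mulVec (x i))))
    (Bhat : Matrix (Fin p) (Fin p) ℝ)
    (hB : Bhat = ρ⁻¹ • D' - ρ⁻¹ • (Xᵀ * diagonal w * X))
    (f : Matrix (Fin p) (Fin p) ℝ → ℝ)
    (hf : ∀ B, f B = (2 * n : ℝ)⁻¹ * ∑ i, (y i - x i ⬝ᵥ B.mulVec (x i)) ^ 2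
      + (ρ / 2) * ∑ j, ∑ k, (B j k - A j k) ^ 2) :
    IsUnit G.det ∧ Bhatᵀ = Bhat ∧ (∀ B, f Bhat ≤ f B) ∧
      (∀ B, (∀ C, f B ≤ f C) → B = Bhat) := by

  -- basic nonvanishing facts
  have hn' : (n : ℝ) ≠ 0 := Nat.cast_ne_zero.mpr hn.ne'
  have hρ' : ρ ≠ 0 := hρ.ne'
  -- entrywise formula for G
  have hGij : ∀ i j, G i j = ρ * (if i = j then 1 else 0)
      + (n : ℝ)⁻¹ * (x i ⬝ᵥ x j) ^ 2 := by
    intro i j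
    have hXX : (X * Xᵀ) i j = x i ⬝ᵥ x j := by
      simp [Matrix.mul_apply, Matrix.transpose_apply, dotProduct, hX]
    rw [hG]
    simp [Matrix.add_apply, Matrix.smul_apply, Matrix.one_apply,
      Matrix.hadamard_apply, hXX, smul_eq_mul, sq]
  -- quadratic form expansion
  have hQ : ∀ (M : Matrix (Fin p) (Fin p) ℝ) (i : Fin n),
      x i ⬝ᵥ M.mulVec (x i) = ∑ a, ∑ b, M a b * (x i a * x i b) := by
    intro M i
    simp only [dotProduct, Matrix.mulVec, dotProduct, Finset.mul_sum]
    exact Finset.sum_congr rfl fun a _ => Finset.sum_congr rfl fun b _ => by ring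
  -- entrywise formula for D'
  have hD'ab : ∀ a b, D' a b = (n : ℝ)⁻¹ * (∑ i, y i * (x i a * x i b)) + ρ * A a b := by
    intro a b
    rw [hD', hD]
    simp only [Matrix.add_apply, Matrix.smul_apply, Matrix.sum_apply,
      Matrix.vecMulVec_apply, smul_eq_mul, Pi.smul_apply]
  -- entrywise formula for Xᵀ diag(w) X
  have hM : ∀ a b, (Xᵀ * diagonal w * X) a b = ∑ j, w j * (x j a * x j b) := by
    intro a b
    simp only [Matrix.mul_apply, Matrix.transpose_apply, Matrix.diagonal_apply,
      Finset.sum_mul, mul_ite, mul_zero, ite_mul, zero_mul]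
    rw [Finset.sum_comm]
    refine Finset.sum_congr rfl fun j _ => ?_
    rw [Finset.sum_ite_eq]
    simp only [Finset.mem_univ, if_true, hX]
    ring
  -- entrywise formula for Bhat
  have hBab : ∀ a b, Bhat a b = ρ⁻¹ * D' a b - ρ⁻¹ * ∑ j, w j * (x j a * x j b) := by
    intro a b
    rw [hB]
    simp [Matrix.sub_apply, Matrix.smul_apply, smul_eq_mul, hM a b]
  -- G is invertible
  have hdet : IsUnit G.det := by
    rw [isUnit_iff_ne_zero]
    intro h0
    obtain ⟨v, hv, hGv⟩ := Matrix.exists_mulVec_eq_zero_iff.2 h0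
    have hq0 : v ⬝ᵥ G.mulVec v = 0 := by rw [hGv, dotProduct_zero]
    have hexp : v ⬝ᵥ G.mulVec v
        = ρ * ∑ i, v i ^ 2 + (n : ℝ)⁻¹ * ∑ i, ∑ j, v i * v j * (x i ⬝ᵥ x j) ^ 2 := by
      simp only [dotProduct, Matrix.mulVec, dotProduct, hGij]
      rw [Finset.mul_sum, Finset.mul_sum, ← Finset.sum_add_distrib]
      refine Finset.sum_congr rfl fun i _ => ?_
      rw [Finset.mul_sum]
      simp only [add_mul, mul_add, mul_ite, ite_mul, zero_mul, mul_zero, one_mul, mul_one]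
      rw [Finset.sum_add_distrib, Finset.sum_ite_eq]
      simp only [Finset.mem_univ, if_true]
      rw [Finset.mul_sum]
      congr 1
      · ring
      · exact Finset.sum_congr rfl fun j _ => by ring
    have hsos : ∑ i, ∑ j, v i * v j * (x i ⬝ᵥ x j) ^ 2
        = ∑ a, ∑ b, (∑ i, v i * (x i a * x i b)) ^ 2 := by
      have e1 : ∀ i j : Fin n, v i * v j * (x i ⬝ᵥ x j) ^ 2
          = ∑ a, ∑ b, (v i * (x i a * x i b)) * (v j * (x j a * x j b)) := by
        intro i j
        rw [dotProduct, sq, Finset.sum_mul_sum, Finset.mul_sum]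
        refine Finset.sum_congr rfl fun a _ => ?_
        rw [Finset.mul_sum]
        exact Finset.sum_congr rfl fun b _ => by ring
      simp_rw [e1]
      rw [sum_comm4']
      refine Finset.sum_congr rfl fun a _ => Finset.sum_congr rfl fun b _ => ?_
      rw [sq, Finset.sum_mul_sum]
    have h1 : 0 ≤ ∑ a, ∑ b, (∑ i, v i * (x i a * x i b)) ^ 2 := by positivity
    obtain ⟨i, hi⟩ := Function.ne_iff.mp hv
    have h2 : 0 < ∑ i, v i ^ 2 := by
      have hpos : 0 < v i ^ 2 :=
        lt_of_le_of_ne (sq_nonneg _) (Ne.symm (pow_ne_zero 2 hi))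
      exact hpos.trans_le (Finset.single_le_sum (fun j _ => sq_nonneg (v j))
        (Finset.mem_univ i))
    have h3 : (0 : ℝ) < (n : ℝ)⁻¹ := by positivity
    rw [hexp, hsos] at hq0
    nlinarith [mul_nonneg h3.le h1]
  -- the linear system G w = d'
  have hGw : G.mulVec w = fun i => (n : ℝ)⁻¹ * (x i ⬝ᵥ D'.mulVec (x i)) := by
    rw [hw, Matrix.mulVec_mulVec, Matrix.mul_nonsing_inv _ hdet, Matrix.one_mulVec]
  have hweq : ∀ i, ρ * w i + (n : ℝ)⁻¹ * ∑ j, (x i ⬝ᵥ x j) ^ 2 * w j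
      = (n : ℝ)⁻¹ * (x i ⬝ᵥ D'.mulVec (x i)) := by
    intro i
    have := congrFun hGw i
    rw [Matrix.mulVec] at this
    rw [← this]
    simp only [dotProduct, hGij]
    simp only [add_mul, mul_ite, mul_one, mul_zero, ite_mul, zero_mul,
      Finset.sum_add_distrib]
    rw [Finset.sum_ite_eq]
    simp only [Finset.mem_univ, if_true]
    rw [Finset.mul_sum]
    congr 1
    exact Finset.sum_congr rfl fun j _ => by ring
  -- the quadratic form of Bhat at x i is n * w i
  have hwB : ∀ i, x i ⬝ᵥ Bhat.mulVec (x i) = (n : ℝ) * w i := by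
    intro i
    have hswap : ∑ a, ∑ b, (∑ j, w j * (x j a * x j b)) * (x i a * x i b)
        = ∑ j, (x i ⬝ᵥ x j) ^ 2 * w j := by
      have e1 : ∀ a b, (∑ j, w j * (x j a * x j b)) * (x i a * x i b)
          = ∑ j, w j * (x j a * x j b) * (x i a * x i b) := fun a b => Finset.sum_mul _ _ _
      simp_rw [e1]
      rw [sum_comm3' (fun a b j => w j * (x j a * x j b) * (x i a * x i b))]
      refine Finset.sum_congr rfl fun j _ => ?_
      have e2 : (x i ⬝ᵥ x j) ^ 2 * w j
          = ∑ a, ∑ b, (x i a * x j a) * ((x i b * x j b) * w j) := by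
        rw [dotProduct, sq, Finset.sum_mul_sum, Finset.sum_mul]
        refine Finset.sum_congr rfl fun a _ => ?_
        rw [Finset.sum_mul]
        exact Finset.sum_congr rfl fun b _ => by ring
      rw [e2]
      exact Finset.sum_congr rfl fun a _ => Finset.sum_congr rfl fun b _ => by ring
    have hqexp : x i ⬝ᵥ Bhat.mulVec (x i)
        = ρ⁻¹ * (x i ⬝ᵥ D'.mulVec (x i)) - ρ⁻¹ * ∑ j, (x i ⬝ᵥ x j) ^ 2 * w j := by
      rw [hQ Bhat i]
      have e3 : ∀ a b, Bhat a b * (x i a * x i b)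
          = ρ⁻¹ * (D' a b * (x i a * x i b))
            - ρ⁻¹ * ((∑ j, w j * (x j a * x j b)) * (x i a * x i b)) := by
        intro a b; rw [hBab]; ring
      simp_rw [e3]
      simp only [Finset.sum_sub_distrib, ← Finset.mul_sum]
      rw [hswap, ← hQ D' i]
    have h2 := hweq i
    rw [hqexp]
    field_simp at h2 ⊢
    nlinarith [h2]
  -- gradient identity
  have hgrad : ∀ a b, ρ * (Bhat a b - A a b)
      = (n : ℝ)⁻¹ * ∑ i, (y i - x i ⬝ᵥ Bhat.mulVec (x i)) * (x i a * x i b) := by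
    intro a b
    have e1 : ∑ i, (y i - x i ⬝ᵥ Bhat.mulVec (x i)) * (x i a * x i b)
        = ∑ i, y i * (x i a * x i b) - (n : ℝ) * ∑ i, w i * (x i a * x i b) := by
      rw [Finset.mul_sum, ← Finset.sum_sub_distrib]
      refine Finset.sum_congr rfl fun i _ => ?_
      rw [hwB i]
      ring
    rw [e1, hBab a b, hD'ab a b]
    field_simp
    ring
  -- symmetry of Bhat
  have hsymm : Bhatᵀ = Bhat := by
    ext a b
    rw [Matrix.transpose_apply, hBab a b, hBab b a, hD'ab a b, hD'ab b a]
    have hAs : A b a = A a b := by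
      have h := congrFun (congrFun hA a) b
      rw [Matrix.transpose_apply] at h
      exact h
    rw [hAs]
    have : ∑ i, y i * (x i b * x i a) = ∑ i, y i * (x i a * x i b) :=
      Finset.sum_congr rfl fun i _ => by ring
    rw [this]
    have : ∑ j, w j * (x j b * x j a) = ∑ j, w j * (x j a * x j b) :=
      Finset.sum_congr rfl fun j _ => by ring
    rw [this]
  -- the key expansion of f
  have hfB : ∀ B, f B = f Bhat
      + (2 * (n : ℝ))⁻¹ * ∑ i, (x i ⬝ᵥ B.mulVec (x i) - x i ⬝ᵥ Bhat.mulVec (x i)) ^ 2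
      + (ρ / 2) * ∑ a, ∑ b, (B a b - Bhat a b) ^ 2 := by
    intro B
    have hcross : ρ * (∑ a, ∑ b, (Bhat a b - A a b) * (B a b - Bhat a b))
        = (n : ℝ)⁻¹ * ∑ i, (y i - x i ⬝ᵥ Bhat.mulVec (x i))
            * (x i ⬝ᵥ B.mulVec (x i) - x i ⬝ᵥ Bhat.mulVec (x i)) := by
      have e1 : ρ * (∑ a, ∑ b, (Bhat a b - A a b) * (B a b - Bhat a b))
          = ∑ a, ∑ b, (ρ * (Bhat a b - A a b)) * (B a b - Bhat a b) := by
        rw [Finset.mul_sum]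
        refine Finset.sum_congr rfl fun a _ => ?_
        rw [Finset.mul_sum]
        exact Finset.sum_congr rfl fun b _ => by ring
      rw [e1]
      simp_rw [hgrad]
      have e2 : ∀ a b, ((n : ℝ)⁻¹ * ∑ i, (y i - x i ⬝ᵥ Bhat.mulVec (x i)) * (x i a * x i b))
            * (B a b - Bhat a b)
          = ∑ i, (n : ℝ)⁻¹ * ((y i - x i ⬝ᵥ Bhat.mulVec (x i))
              * ((x i a * x i b) * (B a b - Bhat a b))) := by
        intro a b
        rw [Finset.mul_sum, Finset.sum_mul]
        exact Finset.sum_congr rfl fun i _ => by ring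
      simp_rw [e2]
      rw [sum_comm3' (fun a b i => (n : ℝ)⁻¹ * ((y i - x i ⬝ᵥ Bhat.mulVec (x i))
              * ((x i a * x i b) * (B a b - Bhat a b))))]
      rw [Finset.mul_sum]
      refine Finset.sum_congr rfl fun i _ => ?_
      have e3 : x i ⬝ᵥ B.mulVec (x i) - x i ⬝ᵥ Bhat.mulVec (x i)
          = ∑ a, ∑ b, (B a b - Bhat a b) * (x i a * x i b) := by
        rw [hQ B i, hQ Bhat i, ← Finset.sum_sub_distrib]
        refine Finset.sum_congr rfl fun a _ => ?_
        rw [← Finset.sum_sub_distrib]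
        exact Finset.sum_congr rfl fun b _ => by ring
      rw [e3, Finset.mul_sum, Finset.mul_sum]
      refine Finset.sum_congr rfl fun a _ => ?_
      rw [Finset.mul_sum, Finset.mul_sum]
      exact Finset.sum_congr rfl fun b _ => by ring
    rw [hf B, hf Bhat]
    have e1 : ∑ i, (y i - x i ⬝ᵥ B.mulVec (x i)) ^ 2
        = ∑ i, (y i - x i ⬝ᵥ Bhat.mulVec (x i)) ^ 2
          - 2 * ∑ i, (y i - x i ⬝ᵥ Bhat.mulVec (x i))
              * (x i ⬝ᵥ B.mulVec (x i) - x i ⬝ᵥ Bhat.mulVec (x i))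
          + ∑ i, (x i ⬝ᵥ B.mulVec (x i) - x i ⬝ᵥ Bhat.mulVec (x i)) ^ 2 := by
      rw [Finset.mul_sum, ← Finset.sum_sub_distrib, ← Finset.sum_add_distrib]
      exact Finset.sum_congr rfl fun i _ => by ring
    have e2 : ∑ a, ∑ b, (B a b - A a b) ^ 2
        = ∑ a, ∑ b, (Bhat a b - A a b) ^ 2
          + 2 * ∑ a, ∑ b, (Bhat a b - A a b) * (B a b - Bhat a b)
          + ∑ a, ∑ b, (B a b - Bhat a b) ^ 2 := by
      simp only [Finset.mul_sum]
      rw [← Finset.sum_add_distrib, ← Finset.sum_add_distrib]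
      refine Finset.sum_congr rfl fun a _ => ?_
      rw [← Finset.sum_add_distrib, ← Finset.sum_add_distrib]
      exact Finset.sum_congr rfl fun b _ => by ring
    rw [e1, e2]
    linear_combination hcross
  refine ⟨hdet, hsymm, ?_, ?_⟩
  · intro B
    rw [hfB B]
    have h1 : 0 ≤ ∑ i, (x i ⬝ᵥ B.mulVec (x i) - x i ⬝ᵥ Bhat.mulVec (x i)) ^ 2 := by positivity
    have h2 : 0 ≤ ∑ a, ∑ b, (B a b - Bhat a b) ^ 2 := by positivity
    have h3 : (0 : ℝ) ≤ (2 * (n : ℝ))⁻¹ := by positivity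
    nlinarith [mul_nonneg h3 h1, mul_nonneg (by positivity : (0:ℝ) ≤ ρ / 2) h2]
  · intro B hmin
    have hle := hmin Bhat
    rw [hfB B] at hle
    have h1 : 0 ≤ ∑ i, (x i ⬝ᵥ B.mulVec (x i) - x i ⬝ᵥ Bhat.mulVec (x i)) ^ 2 := by positivity
    have h2 : 0 ≤ ∑ a, ∑ b, (B a b - Bhat a b) ^ 2 := by positivity
    have h3 : (0 : ℝ) ≤ (2 * (n : ℝ))⁻¹ := by positivity
    have hE : ∑ a, ∑ b, (B a b - Bhat a b) ^ 2 = 0 := by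
      by_contra hne
      have h2' : 0 < ∑ a, ∑ b, (B a b - Bhat a b) ^ 2 := lt_of_le_of_ne h2 (Ne.symm hne)
      nlinarith [mul_nonneg h3 h1, mul_pos (by positivity : (0:ℝ) < ρ / 2) h2']
    ext a b
    have ha := (Finset.sum_eq_zero_iff_of_nonneg
      (fun a _ => Finset.sum_nonneg fun b _ => sq_nonneg _)).mp hE a (Finset.mem_univ a)
    have hb := (Finset.sum_eq_zero_iff_of_nonneg
      (fun b _ => sq_nonneg _)).mp ha b (Finset.mem_univ b)
    have := sq_eq_zero_iff.mp hb
    linarith
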